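/- Let C be a symmetric invertible k × k real matrix, let b_x, b_y ∈ ℝ^k be vectors, and let c_xx, c_xy ∈ ℝ be scalars. Define the Schur complement t := c_xx − b_xᵀ C⁻¹ b_x and assume t ≠ 0. Let C' be the (k+1) × (k+1) bordered matrix with top-left block C, top-right column b_x, bottom-left row b_xᵀ, and bottom-right entry c_xx, and let b' ∈ ℝ^{k+1} be the vector obtained by appending c_xy to b_y. Then C' is invertible and b'ᵀ (C')⁻¹ b' − b_yᵀ C⁻¹ b_y = t⁻¹·(b_xᵀ C⁻¹ b_y − c_xy)². (This is the marginal-gain formula for the variance-reduction objective: f(A ∪ {x}) − f(A) = T_x · Σ_{y ∈ Ω} (R_{x,y}(A) − φ_SE(x − y))², with T_x = t⁻¹ and R_{x,y}(A) = b_xᵀ C⁻¹ b_y.) -/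

import Mathlib

open Matrix

/-- Bordered-matrix (Schur complement) identity underlying the marginal-gain
formula for the variance-reduction objective: bordering a symmetric invertible
matrix `C` by the column `b_x` and corner entry `c_xx` with nonzero Schur
complement `t = c_xx - b_xᵀ C⁻¹ b_x` yields an invertible matrix `C'`, and for
`b'` obtained by appending `c_xy` to `b_y`,
`b'ᵀ (C')⁻¹ b' - b_yᵀ C⁻¹ b_y = t⁻¹ (b_xᵀ C⁻¹ b_y - c_xy)²`. -/
theorem bordered_quadratic_form_diff
    (k : ℕ) (C : Matrix (Fin k) (Fin k) ℝ) (hCsymm : C.IsSymm) (hCinv : IsUnit C)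
    (bx by' : Fin k → ℝ) (cxx cxy : ℝ)
    (t : ℝ) (ht : t = cxx - bx ⬝ᵥ C⁻¹.mulVec bx) (ht0 : t ≠ 0)
    (C' : Matrix (Fin k ⊕ Fin 1) (Fin k ⊕ Fin 1) ℝ)
    (hC' : C' = Matrix.fromBlocks C (Matrix.replicateCol (Fin 1) bx) (Matrix.replicateRow (Fin 1) bx)
      (fun _ _ => cxx))
    (b' : Fin k ⊕ Fin 1 → ℝ) (hb' : b' = Sum.elim by' (fun _ => cxy)) :
    IsUnit C' ∧
    b' ⬝ᵥ (C')⁻¹.mulVec b' - by' ⬝ᵥ C⁻¹.mulVec by' =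
      t⁻¹ * (bx ⬝ᵥ C⁻¹.mulVec by' - cxy) ^ 2 := by
  subst hC' hb'
  letI instC : Invertible C := hCinv.nonempty_invertible.some
  have hinvC : ⅟C = C⁻¹ := invOf_eq_nonsing_inv C
  have hCiSymm : C⁻¹ᵀ = C⁻¹ := by
    rw [Matrix.transpose_nonsing_inv, hCsymm.eq]
  -- the Schur complement is the 1×1 matrix t • 1
  have hS : ((show Matrix (Fin 1) (Fin 1) ℝ from fun _ _ => cxx) -
      Matrix.replicateRow (Fin 1) bx * ⅟C * Matrix.replicateCol (Fin 1) bx) = t • 1 := by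
    rw [Matrix.mul_assoc, hinvC]
    ext i j
    fin_cases i; fin_cases j
    rw [← Matrix.replicateCol_mulVec]
    simp [ht, Matrix.sub_apply]
    rfl
  haveI instS : Invertible ((show Matrix (Fin 1) (Fin 1) ℝ from fun _ _ => cxx) -
      Matrix.replicateRow (Fin 1) bx * ⅟C * Matrix.replicateCol (Fin 1) bx) := by
    refine invertibleOfRightInverse _ (t⁻¹ • 1) ?_
    rw [hS]; simp [smul_smul, mul_inv_cancel₀ ht0, inv_mul_cancel₀ ht0]
  have hinvS : ⅟((show Matrix (Fin 1) (Fin 1) ℝ from fun _ _ => cxx) -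
      Matrix.replicateRow (Fin 1) bx * ⅟C * Matrix.replicateCol (Fin 1) bx) = t⁻¹ • 1 := by
    refine invOf_eq_right_inv ?_
    rw [hS]; simp [smul_smul, mul_inv_cancel₀ ht0, inv_mul_cancel₀ ht0]
  haveI instB : Invertible (Matrix.fromBlocks C (Matrix.replicateCol (Fin 1) bx)
      (Matrix.replicateRow (Fin 1) bx) (fun _ _ => cxx)) :=
    Matrix.fromBlocks₁₁Invertible C (Matrix.replicateCol (Fin 1) bx) (Matrix.replicateRow (Fin 1) bx)
      (show Matrix (Fin 1) (Fin 1) ℝ from fun _ _ => cxx)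
  refine ⟨isUnit_of_invertible _, ?_⟩
  have hBinv : (Matrix.fromBlocks C (Matrix.replicateCol (Fin 1) bx)
      (Matrix.replicateRow (Fin 1) bx) (fun _ _ => cxx))⁻¹ =
      Matrix.fromBlocks
        (C⁻¹ + t⁻¹ • (Matrix.replicateCol (Fin 1) (C⁻¹ *ᵥ bx) * Matrix.replicateRow (Fin 1) (C⁻¹ *ᵥ bx)))
        (-(t⁻¹ • Matrix.replicateCol (Fin 1) (C⁻¹ *ᵥ bx)))
        (-(t⁻¹ • Matrix.replicateRow (Fin 1) (C⁻¹ *ᵥ bx)))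
        (t⁻¹ • 1) := by
    rw [← invOf_eq_nonsing_inv]
    rw [Matrix.invOf_fromBlocks₁₁_eq C (Matrix.replicateCol (Fin 1) bx) (Matrix.replicateRow (Fin 1) bx)
      (show Matrix (Fin 1) (Fin 1) ℝ from fun _ _ => cxx), hinvS, hinvC]
    have hcol : C⁻¹ * Matrix.replicateCol (Fin 1) bx = Matrix.replicateCol (Fin 1) (C⁻¹ *ᵥ bx) :=
      (Matrix.replicateCol_mulVec _ _).symm
    have hrow : Matrix.replicateRow (Fin 1) bx * C⁻¹ = Matrix.replicateRow (Fin 1) (C⁻¹ *ᵥ bx) := by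
      rw [← Matrix.replicateRow_vecMul, ← hCiSymm, Matrix.vecMul_transpose, hCiSymm]
    simp only [Matrix.mul_smul, Matrix.smul_mul, Matrix.one_mul, Matrix.mul_one, Matrix.mul_assoc, hrow, hcol]
  rw [hBinv]
  have hu : bx ᵥ* C⁻¹ = C⁻¹ *ᵥ bx := by rw [← Matrix.mulVec_transpose, hCiSymm]
  have hxy : bx ⬝ᵥ C⁻¹ *ᵥ by' = (C⁻¹ *ᵥ bx) ⬝ᵥ by' := by
    rw [Matrix.dotProduct_mulVec, hu]
  set u := C⁻¹ *ᵥ bx with hudef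
  rw [hxy]
  have hconst : (fun _ : Fin 1 => cxy) = Function.const (Fin 1) cxy := rfl
  have hcolc : ∀ (a : ℝ), Matrix.replicateCol (Fin 1) u *ᵥ (Function.const (Fin 1) a) = a • u := by
    intro a; ext i; simp [Matrix.mulVec, dotProduct, mul_comm]
  have hdotc : ∀ (w : Fin 1 → ℝ) (a : ℝ), (Function.const (Fin 1) a) ⬝ᵥ w = a * w 0 := by
    intro w a; simp [dotProduct]
  simp only [hconst, Matrix.fromBlocks_mulVec, sumElim_dotProduct_sumElim,
    Matrix.add_mulVec, Matrix.mulVec_add, Matrix.neg_mulVec, Matrix.smul_mulVec,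
    dotProduct_add, dotProduct_neg, dotProduct_smul,
    ← Matrix.mulVec_mulVec, Matrix.replicateRow_mulVec_eq_const, Matrix.one_mulVec, Sum.elim_comp_inl, Sum.elim_comp_inr, hcolc, hdotc,
    smul_eq_mul, Function.const_apply]
  rw [dotProduct_comm by' u]
  simp only [Pi.add_apply, Pi.neg_apply, Pi.smul_apply, Function.const_apply, smul_eq_mul]
  field_simp
  ring
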